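/- arXiv:2303.12698 — 2 statements merged into one kernel-verified Lean document; each statement's English description precedes it below -/
import Mathlib

section
/- Let Θ ⊆ ℝ^d be a convex set and g : ℝ^d → ℝ a convex function. Let θ^(0), θ^(1), …, θ^(m−1) ∈ Θ and define θ̃^(m) = (1/m)·Σ_{i=0}^{m−1} θ^(i). Let η₂ > 0, λ^(0) ≥ 0, and generate the dual sequence by λ^(i+1) = max{λ^(i) + η₂·g(θ^(i)), 0} for i = 0, …, m−1 (the dual update of Eq. (9) with γ = 0 and δ = 0). Then max{g(θ̃^(m)), 0} ≤ λ^(m)/(m·η₂). -/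
/-- Statement 1 of Proposition 2 (simplified dual update with γ = 0, δ = 0):
the constraint violation of the running average satisfies
[g(θ̃^(m))]_+ ≤ λ^(m)/(m·η₂). -/
theorem stmt3 {d : ℕ} (Θ : Set (EuclideanSpace ℝ (Fin d))) (hΘ : Convex ℝ Θ)
    (g : EuclideanSpace ℝ (Fin d) → ℝ) (hg : ConvexOn ℝ Set.univ g)
    (m : ℕ) (hm : 1 ≤ m)
    (θ : ℕ → EuclideanSpace ℝ (Fin d)) (hθ : ∀ i < m, θ i ∈ Θ)
    (η₂ : ℝ) (hη : 0 < η₂)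
    (lam : ℕ → ℝ) (hlam0 : 0 ≤ lam 0)
    (hdual : ∀ i < m, lam (i + 1) = max (lam i + η₂ * g (θ i)) 0) :
    max (g ((m : ℝ)⁻¹ • ∑ i ∈ Finset.range m, θ i)) 0 ≤ lam m / (m * η₂) := by
  have hm0 : (0:ℝ) < m := by exact_mod_cast hm
  -- telescoping: η₂ * g (θ i) ≤ lam (i+1) - lam i
  have hstep : ∀ i < m, η₂ * g (θ i) ≤ lam (i + 1) - lam i := by
    intro i hi
    have := hdual i hi
    have : lam i + η₂ * g (θ i) ≤ lam (i + 1) := this ▸ le_max_left _ _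
    linarith
  have hsum : η₂ * ∑ i ∈ Finset.range m, g (θ i) ≤ lam m - lam 0 := by
    rw [Finset.mul_sum]
    have := Finset.sum_le_sum (fun i hi => hstep i (Finset.mem_range.mp hi))
    simpa [Finset.sum_range_succ_sub_sum, Finset.sum_range_sub (f := lam)] using this
  have hlamm : 0 ≤ lam m := by
    obtain ⟨k, rfl⟩ : ∃ k, m = k + 1 := ⟨m - 1, (Nat.succ_pred_eq_of_pos hm).symm⟩
    rw [hdual k (Nat.lt_succ_self k)]; exact le_max_right _ _
  -- Jensen
  have hJ : g ((m : ℝ)⁻¹ • ∑ i ∈ Finset.range m, θ i)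
      ≤ ∑ i ∈ Finset.range m, (m : ℝ)⁻¹ * g (θ i) := by
    have h := hg.map_sum_le (t := Finset.range m) (w := fun _ => (m : ℝ)⁻¹)
      (p := θ) (fun i _ => by positivity)
      (by simp [Finset.sum_const, mul_inv_cancel₀ hm0.ne'])
      (fun i _ => Set.mem_univ _)
    simpa [Finset.smul_sum] using h
  have hsum' : ∑ i ∈ Finset.range m, g (θ i) ≤ lam m / η₂ := by
    rw [le_div_iff₀ hη]; nlinarith
  have hmain : g ((m : ℝ)⁻¹ • ∑ i ∈ Finset.range m, θ i) ≤ lam m / (m * η₂) := by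
    calc g ((m : ℝ)⁻¹ • ∑ i ∈ Finset.range m, θ i)
        ≤ ∑ i ∈ Finset.range m, (m : ℝ)⁻¹ * g (θ i) := hJ
      _ = (m : ℝ)⁻¹ * ∑ i ∈ Finset.range m, g (θ i) := by rw [Finset.mul_sum]
      _ ≤ (m : ℝ)⁻¹ * (lam m / η₂) := by
          exact mul_le_mul_of_nonneg_left hsum' (by positivity)
      _ = lam m / (m * η₂) := by field_simp
  have : (0:ℝ) ≤ lam m / (m * η₂) := by positivity
  exact max_le hmain this
end

section
/- Let Θ ⊆ ℝ^d be a nonempty compact convex set, and let L : ℝ^d → ℝ and g : ℝ^d → ℝ be convex functions with {θ ∈ Θ : g(θ) ≤ 0} nonempty; set f* = inf{L(θ) : θ ∈ Θ, g(θ) ≤ 0} and define the dual function q(λ) = inf_{θ∈Θ} (L(θ) + λ·g(θ)) for λ ≥ 0. Let η₂ > 0, λ^(0) ≥ 0, and suppose L_g > 0 satisfies |g(θ)| ≤ L_g for all θ ∈ Θ. Generate primal iterates θ^(i) ∈ Θ such that θ^(i) minimizes L(θ) + λ^(i)·g(θ) over Θ, and dual iterates λ^(i+1) = max{λ^(i)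 + η₂·g(θ^(i)), 0}, and set θ̃^(m) = (1/m)·Σ_{i=0}^{m−1} θ^(i). Then for every m ≥ 1, L(θ̃^(m)) ≤ f* + (λ^(0))²/(2m·η₂) + η₂·L_g²/2. -/
/-- Statement 2 of Proposition 2: an upper bound on the primal cost of the
running averages, L(θ̃^(m)) ≤ f* + (λ^(0))²/(2mη₂) + η₂·L_g²/2. -/
theorem stmt5 {d : ℕ} (Θ : Set (EuclideanSpace ℝ (Fin d)))
    (hne : Θ.Nonempty) (hcomp : IsCompact Θ) (hconv : Convex ℝ Θ)
    (L g : EuclideanSpace ℝ (Fin d) → ℝ)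
    (hL : ConvexOn ℝ Set.univ L) (hg : ConvexOn ℝ Set.univ g)
    (hfeas : {x | x ∈ Θ ∧ g x ≤ 0}.Nonempty)
    (fstar : ℝ) (hfstar : fstar = sInf (L '' {x | x ∈ Θ ∧ g x ≤ 0}))
    (q : ℝ → ℝ)
    (hq : ∀ lam : ℝ, 0 ≤ lam → q lam = sInf ((fun x => L x + lam * g x) '' Θ))
    (η₂ : ℝ) (hη : 0 < η₂)
    (lam : ℕ → ℝ) (hlam0 : 0 ≤ lam 0)
    (Lg : ℝ) (hLg : 0 < Lg) (hgbd : ∀ x ∈ Θ, |g x| ≤ Lg)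
    (θ : ℕ → EuclideanSpace ℝ (Fin d)) (hθmem : ∀ i, θ i ∈ Θ)
    (hmin : ∀ i, ∀ x ∈ Θ, L (θ i) + lam i * g (θ i) ≤ L x + lam i * g x)
    (hdual : ∀ i, lam (i + 1) = max (lam i + η₂ * g (θ i)) 0)
    (m : ℕ) (hm : 1 ≤ m) :
    L ((m : ℝ)⁻¹ • ∑ i ∈ Finset.range m, θ i) ≤
      fstar + (lam 0) ^ 2 / (2 * m * η₂) + η₂ * Lg ^ 2 / 2 := by
  have hmpos : (0 : ℝ) < m := by exact_mod_cast hm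
  -- nonnegativity of dual iterates
  have hlamnn : ∀ i, 0 ≤ lam i := by
    intro i
    cases i with
    | zero => exact hlam0
    | succ n => rw [hdual n]; exact le_max_right _ _
  -- weak duality: L θᵢ + λᵢ g θᵢ ≤ fstar
  have hwd : ∀ i, L (θ i) + lam i * g (θ i) ≤ fstar := by
    intro i
    rw [hfstar]
    apply le_csInf (hfeas.image L)
    rintro b ⟨x, ⟨hxΘ, hxg⟩, rfl⟩
    calc L (θ i) + lam i * g (θ i) ≤ L x + lam i * g x := hmin i x hxΘ
      _ ≤ L x := by nlinarith [hlamnn i]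
  -- key per-step bound
  have hkey : ∀ i, L (θ i) ≤ fstar + ((lam i) ^ 2 - (lam (i + 1)) ^ 2) / (2 * η₂)
      + η₂ * Lg ^ 2 / 2 := by
    intro i
    have hg2 : (g (θ i)) ^ 2 ≤ Lg ^ 2 := sq_le_sq' (by linarith [abs_le.1 (hgbd _ (hθmem i))])
      (abs_le.1 (hgbd _ (hθmem i))).2
    have hrec : (lam (i + 1)) ^ 2 ≤ (lam i + η₂ * g (θ i)) ^ 2 := by
      rw [hdual i]
      rcases le_total (lam i + η₂ * g (θ i)) 0 with h | h
      · rw [max_eq_right h]; simpa using sq_nonneg (lam i + η₂ * g (θ i))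
      · rw [max_eq_left h]
    have hgl : -(lam i * g (θ i)) - η₂ * Lg ^ 2 / 2 ≤
        ((lam i) ^ 2 - (lam (i + 1)) ^ 2) / (2 * η₂) := by
      rw [le_div_iff₀ (by positivity : (0:ℝ) < 2 * η₂)]
      nlinarith [hrec, mul_le_mul_of_nonneg_left hg2 (mul_pos hη hη).le]
    linarith [hwd i, hgl]
  -- Jensen
  have hjensen : L ((m : ℝ)⁻¹ • ∑ i ∈ Finset.range m, θ i) ≤
      ∑ i ∈ Finset.range m, (m : ℝ)⁻¹ * L (θ i) := by
    have := hL.map_sum_le (t := Finset.range m) (w := fun _ => (m : ℝ)⁻¹)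
      (p := θ) (fun i _ => by positivity)
      (by simp [Finset.sum_const]; field_simp) (fun i _ => Set.mem_univ _)
    simpa [Finset.smul_sum] using this
  -- sum the key bounds
  have hsum : ∑ i ∈ Finset.range m, L (θ i) ≤
      m * fstar + ((lam 0) ^ 2 - (lam m) ^ 2) / (2 * η₂) + m * (η₂ * Lg ^ 2 / 2) := by
    calc ∑ i ∈ Finset.range m, L (θ i)
        ≤ ∑ i ∈ Finset.range m, (fstar + ((lam i) ^ 2 - (lam (i + 1)) ^ 2) / (2 * η₂)
            + η₂ * Lg ^ 2 / 2) := Finset.sum_le_sum (fun i _ => hkey i)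
      _ = m * fstar + (∑ i ∈ Finset.range m, ((lam i) ^ 2 - (lam (i + 1)) ^ 2)) / (2 * η₂)
            + m * (η₂ * Lg ^ 2 / 2) := by
          rw [Finset.sum_add_distrib, Finset.sum_add_distrib, Finset.sum_const,
            Finset.sum_const, ← Finset.sum_div]
          simp [mul_comm]
      _ = m * fstar + ((lam 0) ^ 2 - (lam m) ^ 2) / (2 * η₂) + m * (η₂ * Lg ^ 2 / 2) := by
          rw [Finset.sum_range_sub' (fun i => (lam i) ^ 2)]
  have hlamm : 0 ≤ (lam m) ^ 2 := sq_nonneg _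
  calc L ((m : ℝ)⁻¹ • ∑ i ∈ Finset.range m, θ i)
      ≤ ∑ i ∈ Finset.range m, (m : ℝ)⁻¹ * L (θ i) := hjensen
    _ = (m : ℝ)⁻¹ * ∑ i ∈ Finset.range m, L (θ i) := by rw [Finset.mul_sum]
    _ ≤ (m : ℝ)⁻¹ * (m * fstar + ((lam 0) ^ 2 - (lam m) ^ 2) / (2 * η₂)
          + m * (η₂ * Lg ^ 2 / 2)) := by
        apply mul_le_mul_of_nonneg_left hsum (by positivity)
    _ ≤ fstar + (lam 0) ^ 2 / (2 * m * η₂) + η₂ * Lg ^ 2 / 2 := by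
        rw [mul_add, mul_add, inv_mul_cancel_left₀ (ne_of_gt hmpos),
          inv_mul_cancel_left₀ (ne_of_gt hmpos)]
        have h1 : (m : ℝ)⁻¹ * (((lam 0) ^ 2 - (lam m) ^ 2) / (2 * η₂)) =
            ((lam 0) ^ 2 - (lam m) ^ 2) / (2 * m * η₂) := by
          rw [inv_mul_eq_div, div_div]
          ring_nf
        have h2 : ((lam 0) ^ 2 - (lam m) ^ 2) / (2 * m * η₂) ≤
            (lam 0) ^ 2 / (2 * m * η₂) := by
          exact (div_le_div_iff_of_pos_right (by positivity)).2 (by linarith)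
        linarith [h1 ▸ h2]
end
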